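/- Every completely positive map E on the space of N×N complex matrices admits an operator-sum representation: there exist at most N² operators E_k such that E(ρ) = Σ_k E_k ρ E_k† for all ρ. -/

import Mathlib

open Matrix ComplexOrder

/-- The ampliation `1_k ⊗ E` acting on block matrices `M_k(M_N(ℂ))`. -/
def ampliation (k N : ℕ)
    (E : Matrix (Fin N) (Fin N) ℂ →ₗ[ℂ] Matrix (Fin N) (Fin N) ℂ)
    (M : Matrix (Fin k × Fin N) (Fin k × Fin N) ℂ) :
    Matrix (Fin k × Fin N) (Fin k × Fin N) ℂ :=
  fun p q => E (Matrix.of fun a b => M (p.1, a) (q.1, b)) p.2 q.2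

/-- A linear map on `M_N(ℂ)` is completely positive if all its ampliations are positive. -/
def IsCompletelyPositive (N : ℕ)
    (E : Matrix (Fin N) (Fin N) ℂ →ₗ[ℂ] Matrix (Fin N) (Fin N) ℂ) : Prop :=
  ∀ k : ℕ, ∀ M : Matrix (Fin k × Fin N) (Fin k × Fin N) ℂ,
    M.PosSemidef → (ampliation k N E M).PosSemidef

/-- Every completely positive map on `M_N(ℂ)` admits an operator-sum (Kraus)
representation with at most `N²` operators. -/
theorem operator_sum_representation (N : ℕ)
    (E : Matrix (Fin N) (Fin N) ℂ →ₗ[ℂ] Matrix (Fin N) (Fin N) ℂ)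
    (hE : IsCompletelyPositive N E) :
    ∃ K : Fin (N ^ 2) → Matrix (Fin N) (Fin N) ℂ,
      ∀ ρ : Matrix (Fin N) (Fin N) ℂ,
        E ρ = ∑ k, K k * ρ * (K k)ᴴ := by
  classical
  set v : Fin N × Fin N → ℂ := fun p => if p.1 = p.2 then 1 else 0 with hv
  set M : Matrix (Fin N × Fin N) (Fin N × Fin N) ℂ :=
    Matrix.of (fun p q => v p * star (v q)) with hMdef
  have hM : M.PosSemidef := by
    rw [posSemidef_iff_dotProduct_mulVec]
    constructor
    · ext p q
      simp only [hMdef, conjTranspose_apply, Matrix.of_apply, StarMul.star_mul, star_star]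
    · intro x
      have key : star x ⬝ᵥ M *ᵥ x
          = (∑ p, star (x p) * v p) * (∑ q, star (v q) * x q) := by
        rw [Finset.sum_mul_sum]
        simp only [dotProduct, mulVec, Finset.mul_sum, Pi.star_apply]
        refine Finset.sum_congr rfl fun p _ => Finset.sum_congr rfl fun q _ => ?_
        simp only [hMdef, Matrix.of_apply, dotProduct]
        ring
      have h2 : (∑ p, star (x p) * v p) = star (∑ q, star (v q) * x q) := by
        rw [star_sum]
        exact Finset.sum_congr rfl fun p _ => by simp [mul_comm]
      rw [key, h2]
      exact star_mul_self_nonneg _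
  obtain ⟨B, hB⟩ : ∃ B : Matrix (Fin N × Fin N) (Fin N × Fin N) ℂ, ampliation N N E M = Bᴴ * B := by
    open MatrixOrder in
    have hA : 0 ≤ ampliation N N E M := Matrix.nonneg_iff_posSemidef.mpr (hE N M hM)
    obtain ⟨X, hX, -, hXe⟩ := sub_zero (ampliation N N E M) ▸
      CFC.exists_sqrt_of_isSelfAdjoint_of_quasispectrumRestricts (hE N M hM).isHermitian
        (QuasispectrumRestricts.nnreal_of_nonneg hA)
    exact ⟨X, by rw [← Matrix.star_eq_conjTranspose, hX.star_eq, hXe, sub_zero]⟩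
  have hChoi : ∀ i j a b, E (Matrix.single i j (1 : ℂ)) a b
      = ∑ r, star (B r (i, a)) * B r (j, b) := by
    intro i j a b
    have h2 : (Matrix.of fun a' b' => M (i, a') (j, b')) = Matrix.single i j (1 : ℂ) := by
      ext a' b'
      simp only [hMdef, hv, Matrix.of_apply, Matrix.single, apply_ite, star_one, star_zero,
        mul_ite, mul_one, mul_zero, ite_mul, one_mul, zero_mul]
      split_ifs <;> simp_all
    calc E (Matrix.single i j (1 : ℂ)) a b
        = ampliation N N E M (i, a) (j, b) := by
          show _ = E (Matrix.of fun a' b' => M (i, a') (j, b')) a b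
          rw [h2]
      _ = (Bᴴ * B) (i, a) (j, b) := by rw [hB]
      _ = ∑ r, star (B r (i, a)) * B r (j, b) := by
          simp [Matrix.mul_apply, conjTranspose_apply]
  let e : Fin N × Fin N ≃ Fin (N ^ 2) := finProdFinEquiv.trans (finCongr (sq N).symm)
  set Kf : Fin N × Fin N → Matrix (Fin N) (Fin N) ℂ :=
    fun r => Matrix.of fun a i => star (B r (i, a)) with hKf
  refine ⟨fun k => Kf (e.symm k), fun ρ => ?_⟩
  ext a b
  have lhs_eq : E ρ a b = ∑ i, ∑ j, ρ i j * ∑ r, star (B r (i, a)) * B r (j, b) := by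
    conv_lhs => rw [matrix_eq_sum_single ρ]
    have hsb : ∀ i j : Fin N, Matrix.single i j (ρ i j) = ρ i j • Matrix.single i j (1 : ℂ) := by
      intro i j; rw [smul_single]; simp
    simp only [hsb, map_sum, LinearMap.map_smul, Matrix.sum_apply, Matrix.smul_apply,
      smul_eq_mul, hChoi]
  rw [lhs_eq, Matrix.sum_apply]
  rw [Fintype.sum_equiv e.symm _ (fun r => (Kf r * ρ * (Kf r)ᴴ) a b) fun k => rfl]
  simp only [hKf, Matrix.mul_apply, conjTranspose_apply, Matrix.of_apply, star_star,
    Finset.sum_mul, Finset.mul_sum]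
  rw [Finset.sum_comm]
  conv_rhs => rw [Finset.sum_comm]
  refine Finset.sum_congr rfl fun j _ => ?_
  rw [Finset.sum_comm]
  refine Finset.sum_congr rfl fun r _ => Finset.sum_congr rfl fun i _ => ?_
  ring
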